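/- arXiv:1304.7923 — 3 statements merged into one kernel-verified Lean document; each statement's English description precedes it below -/
import Mathlib

section
/- Suppose integers a1, a2, a3, b1, b2, b3 satisfy a1+a2+a3+b1+b2+b3 = 0 together with the inequalities a_i + nu(s_{ij}) + b_j >= 0 for all i, j, where s_{ij} are the entries of the matrix s = [[1, 1, t^{-1}], [-(t^{-2}+1), -(t^{-1}+1), -(t^{-2}+1)], [t^{-1}, 1, 1]] and nu is the valuation at infinity on Q(t). Then a1 = a2 = a3 = -b1 = -b2 = -b3. -/
open RatFunc

/-- The conjugating matrix `s` over `ℚ(t)`. -/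
noncomputable def smat : Matrix (Fin 3) (Fin 3) (RatFunc ℚ) :=
  !![1, 1, X⁻¹;
     -(X⁻¹ ^ 2 + 1), -(X⁻¹ + 1), -(X⁻¹ ^ 2 + 1);
     X⁻¹, 1, 1]

/-- The valuation at infinity on `ℚ(t)`: `ν(p/q) = deg q - deg p`. -/
noncomputable def nuInfty (x : RatFunc ℚ) : ℤ := -x.intDegree

lemma X_ne_zero' : (X : RatFunc ℚ) ≠ 0 := by
  intro h
  have := RatFunc.intDegree_X (K := ℚ)
  rw [h, RatFunc.intDegree_zero] at this
  exact one_ne_zero this.symm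

lemma intDegree_X_inv : RatFunc.intDegree (X⁻¹ : RatFunc ℚ) = -1 := by
  have h2 := RatFunc.intDegree_mul (x := (X : RatFunc ℚ)) (y := X⁻¹)
    X_ne_zero' (inv_ne_zero X_ne_zero')
  rw [mul_inv_cancel₀ X_ne_zero', RatFunc.intDegree_one, RatFunc.intDegree_X] at h2
  omega

lemma algMap_one_add_X : (1 : RatFunc ℚ) + X =
    algebraMap (Polynomial ℚ) (RatFunc ℚ) (1 + Polynomial.X) := by
  rw [map_add, map_one, RatFunc.algebraMap_X]

lemma algMap_one_add_X_sq : (1 : RatFunc ℚ) + X ^ 2 =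
    algebraMap (Polynomial ℚ) (RatFunc ℚ) (1 + Polynomial.X ^ 2) := by
  rw [map_add, map_one, map_pow, RatFunc.algebraMap_X]

lemma poly_one_add_X_ne_zero : (1 : Polynomial ℚ) + Polynomial.X ≠ 0 := by
  intro h
  have := congrArg Polynomial.natDegree h
  simp [Polynomial.natDegree_X_add_C] at this
  rw [add_comm] at this
  rw [show (1 : Polynomial ℚ) = Polynomial.C 1 from rfl] at this
  rw [Polynomial.natDegree_X_add_C] at this
  exact one_ne_zero this

lemma poly_one_add_X_sq_ne_zero : (1 : Polynomial ℚ) + Polynomial.X ^ 2 ≠ 0 := by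
  intro h
  have := congrArg Polynomial.natDegree h
  rw [add_comm, show (1 : Polynomial ℚ) = Polynomial.C 1 from rfl,
    Polynomial.natDegree_X_pow_add_C] at this
  simp at this

lemma one_add_X_ne_zero : (1 : RatFunc ℚ) + X ≠ 0 := by
  rw [algMap_one_add_X]
  exact RatFunc.algebraMap_ne_zero poly_one_add_X_ne_zero

lemma one_add_X_sq_ne_zero : (1 : RatFunc ℚ) + X ^ 2 ≠ 0 := by
  rw [algMap_one_add_X_sq]
  exact RatFunc.algebraMap_ne_zero poly_one_add_X_sq_ne_zero

lemma intDegree_Xinv_add_one : RatFunc.intDegree ((X⁻¹ : RatFunc ℚ) + 1) = 0 := by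
  have key : (X⁻¹ : RatFunc ℚ) + 1 = X⁻¹ * (1 + X) := by
    rw [mul_add, mul_one, inv_mul_cancel₀ X_ne_zero', add_comm]
  rw [key, RatFunc.intDegree_mul (inv_ne_zero X_ne_zero') one_add_X_ne_zero,
    intDegree_X_inv, algMap_one_add_X, RatFunc.intDegree_polynomial,
    show (1 : Polynomial ℚ) = Polynomial.C 1 from rfl, add_comm (Polynomial.C 1),
    Polynomial.natDegree_X_add_C]
  rfl

lemma intDegree_Xinv_sq_add_one : RatFunc.intDegree ((X⁻¹ : RatFunc ℚ) ^ 2 + 1) = 0 := by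
  have key : (X⁻¹ : RatFunc ℚ) ^ 2 + 1 = X⁻¹ * (X⁻¹ * (1 + X ^ 2)) := by
    rw [← mul_assoc, ← sq, mul_add, mul_one, ← mul_pow, inv_mul_cancel₀ X_ne_zero',
      one_pow, add_comm]
  rw [key, RatFunc.intDegree_mul (inv_ne_zero X_ne_zero')
      (mul_ne_zero (inv_ne_zero X_ne_zero') one_add_X_sq_ne_zero),
    RatFunc.intDegree_mul (inv_ne_zero X_ne_zero') one_add_X_sq_ne_zero,
    intDegree_X_inv, algMap_one_add_X_sq, RatFunc.intDegree_polynomial,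
    show (1 : Polynomial ℚ) = Polynomial.C 1 from rfl, add_comm (Polynomial.C 1),
    Polynomial.natDegree_X_pow_add_C]
  rfl

/-- If integers `a₁, a₂, a₃, b₁, b₂, b₃` satisfy `a₁+a₂+a₃+b₁+b₂+b₃ = 0` and
`aᵢ + ν(sᵢⱼ) + bⱼ ≥ 0` for all `i, j` (with `ν` the valuation at infinity), then
`a₁ = a₂ = a₃ = -b₁ = -b₂ = -b₃`.  This is the key computation showing that the
apartments `Σ_f` and `Σ_k` meet in exactly one vertex. -/
theorem apartments_meet_in_one_vertex (a b : Fin 3 → ℤ)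
    (hsum : a 0 + a 1 + a 2 + b 0 + b 1 + b 2 = 0)
    (hineq : ∀ i j : Fin 3, 0 ≤ a i + nuInfty (smat i j) + b j) :
    a 0 = a 1 ∧ a 1 = a 2 ∧ a 2 = -b 0 ∧ b 0 = b 1 ∧ b 1 = b 2 := by
  have h00 := hineq 0 0
  have h01 := hineq 0 1
  have h02 := hineq 0 2
  have h10 := hineq 1 0
  have h11 := hineq 1 1
  have h12 := hineq 1 2
  have h20 := hineq 2 0
  have h21 := hineq 2 1
  have h22 := hineq 2 2
  simp only [smat, nuInfty, Matrix.cons_val', Matrix.cons_val_zero, Matrix.cons_val_one,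
    Matrix.head_cons, Matrix.empty_val', Matrix.cons_val_fin_one, Matrix.head_fin_const,
    Matrix.cons_val_two, Matrix.tail_cons, Matrix.of_apply,
    RatFunc.intDegree_one, intDegree_X_inv, RatFunc.intDegree_neg,
    intDegree_Xinv_add_one, intDegree_Xinv_sq_add_one]
    at h00 h01 h02 h10 h11 h12 h20 h21 h22
  omega
end

section
/- For n = 0 there do NOT exist integers a, b, c and a matrix m in GL_3(O) with f^0 = b * diag(t^{-a}, t^{-b}, t^{-c}) * m, where b = [[1, t^{-1}-1, t], [0, 1-t^{-1}, -(t^{-1}+t)], [0, 0, 1]] and O = Q[t^{-1}]. Equivalently, b itself is not expressible as a diagonal matrix of powers of t times an element of GL_3(O). -/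
open RatFunc

/-- The matrix `b_{f,k}` taking the standard frame to the frame of `Σ_{f,k}`. -/
noncomputable def bfk : Matrix (Fin 3) (Fin 3) (RatFunc ℚ) :=
  !![1, X⁻¹ - 1, X;
     0, 1 - X⁻¹, -(X⁻¹ + X);
     0, 0, 1]

/-- Membership in the valuation ring `𝒪 = ℚ[t⁻¹]` of the valuation at infinity. -/
noncomputable def InO (x : RatFunc ℚ) : Prop :=
  ∃ p : Polynomial ℚ, x = Polynomial.aeval (X⁻¹ : RatFunc ℚ) p

section Aux

open FunctionField Multiplicative
open scoped Multiplicative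

local notation "ℤₘ₀" => WithZero (Multiplicative ℤ)

noncomputable local instance : DecidableEq (RatFunc ℚ) := Classical.decEq _

noncomputable def vv : Valuation (RatFunc ℚ) ℤₘ₀ := RatFunc.inftyValuation ℚ

lemma vvX : vv X = ((ofAdd (1:ℤ) : Multiplicative ℤ) : ℤₘ₀) := by
  rw [vv, RatFunc.inftyValuation.X]; rfl

lemma vvXinv : vv X⁻¹ = ((ofAdd (-1:ℤ) : Multiplicative ℤ) : ℤₘ₀) := by
  rw [map_inv₀, vvX]; rfl

lemma vvXz (n : ℤ) : vv (X ^ n) = ((ofAdd n : Multiplicative ℤ) : ℤₘ₀) := by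
  rw [map_zpow₀, vvX, ← WithZero.coe_zpow, ← ofAdd_zsmul]
  norm_num

lemma le_one_iff (n : ℤ) : ((ofAdd n : Multiplicative ℤ) : ℤₘ₀) ≤ 1 ↔ n ≤ 0 := by
  rw [← WithZero.coe_one, WithZero.coe_le_coe, ← ofAdd_zero, Multiplicative.ofAdd_le]

lemma vvC (a : ℚ) : vv (algebraMap ℚ (RatFunc ℚ) a) ≤ 1 := by
  rcases eq_or_ne a 0 with rfl | h
  · simp
  · rw [show (algebraMap ℚ (RatFunc ℚ) a) = RatFunc.C a from by rw [eq_ratCast (algebraMap ℚ (RatFunc ℚ)) a, eq_ratCast RatFunc.C a], vv,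
      RatFunc.inftyValuation.C ℚ h]


lemma InO_le_one {x : RatFunc ℚ} (h : InO x) : vv x ≤ 1 := by
  obtain ⟨p, rfl⟩ := h
  induction p using Polynomial.induction_on' with
  | add p q hp hq =>
    rw [map_add]
    exact le_trans (vv.map_add _ _) (max_le hp hq)
  | monomial n a =>
    rw [Polynomial.aeval_monomial, map_mul]
    have h1 : vv (X⁻¹ ^ n : RatFunc ℚ) ≤ 1 := by
      rw [map_pow]
      exact pow_le_one' (by rw [vvXinv, le_one_iff]; norm_num) n
    exact mul_le_one' (vvC a) h1

lemma lt_iff (n k : ℤ) : ((ofAdd n : Multiplicative ℤ) : ℤₘ₀) < ((ofAdd k : Multiplicative ℤ) : ℤₘ₀) ↔ n < k := by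
  rw [WithZero.coe_lt_coe, Multiplicative.ofAdd_lt]

lemma vv_one_sub : vv (1 - X⁻¹) = 1 := by
  apply Valuation.map_one_sub_of_lt
  rw [vvXinv, ← WithZero.coe_one, ← ofAdd_zero, lt_iff]; norm_num

lemma vv_add : vv (X⁻¹ + X) = ((ofAdd (1:ℤ) : Multiplicative ℤ) : ℤₘ₀) := by
  rw [Valuation.map_add_eq_of_lt_right, vvX]
  rw [vvX, vvXinv, lt_iff]; norm_num

lemma key {n k : ℤ} {y : ℤₘ₀} (hy : y ≤ 1)
    (h : ((ofAdd n : Multiplicative ℤ) : ℤₘ₀) = ((ofAdd k : Multiplicative ℤ) : ℤₘ₀) * y) :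
    n ≤ k := by
  have h2 : ((ofAdd n : Multiplicative ℤ) : ℤₘ₀) ≤ ((ofAdd k : Multiplicative ℤ) : ℤₘ₀) := by
    rw [h]
    exact mul_le_of_le_one_right' hy
  rwa [WithZero.coe_le_coe, Multiplicative.ofAdd_le] at h2



/-- `f⁰ = 1` is *not* expressible as `b_{f,k} ⬝ diag(t^{-a}, t^{-b}, t^{-c}) ⬝ m` with
`m ∈ GL₃(𝒪)`; that is, the base vertex `v` does not lie in the apartment `Σ_{f,k}`. -/
theorem v_not_in_apartment :
    ¬ ∃ (a b c : ℤ) (m : Matrix (Fin 3) (Fin 3) (RatFunc ℚ)),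
        (∀ i j, InO (m i j)) ∧ InO m.det ∧ InO m.det⁻¹ ∧
        (1 : Matrix (Fin 3) (Fin 3) (RatFunc ℚ)) =
          bfk * Matrix.diagonal ![X ^ (-a), X ^ (-b), X ^ (-c)] * m := by
  rintro ⟨a, b, c, m, hm, hdet, hdetinv, heq⟩
  rw [Matrix.mul_assoc] at heq
  have h20 := congr_fun (congr_fun heq 2) 0
  have h22 := congr_fun (congr_fun heq 2) 2
  have h10 := congr_fun (congr_fun heq 1) 0
  have h12 := congr_fun (congr_fun heq 1) 2
  have h00 := congr_fun (congr_fun heq 0) 0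
  simp [bfk, Matrix.mul_apply, Fin.sum_univ_three, Matrix.one_apply,
    Matrix.diagonal_mul] at h20 h22 h10 h12 h00
  have hX : (X : RatFunc ℚ) ≠ 0 := RatFunc.X_ne_zero
  have hXz : ∀ n : ℤ, (X : RatFunc ℚ) ^ n ≠ 0 := fun n => zpow_ne_zero n hX
  have h1u : (1 - X⁻¹ : RatFunc ℚ) ≠ 0 := by
    intro h
    have := congrArg vv h
    rw [vv_one_sub, map_zero] at this
    exact one_ne_zero this
  have hm20 : m 2 0 = 0 := h20.resolve_left (hXz c)
  rw [hm20, mul_zero, mul_zero, add_zero] at h10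
  have hm10 : m 1 0 = 0 := by
    rcases mul_eq_zero.mp h10.symm with h | h
    · exact absurd h h1u
    · rcases mul_eq_zero.mp h with h | h
      · exact absurd h (inv_ne_zero (hXz b))
      · exact h
  rw [hm10, hm20] at h00
  simp only [mul_zero, add_zero] at h00
  -- a ≤ 0
  have ha : (0 : ℤ) ≤ -a := by
    apply key (InO_le_one (hm 0 0))
    have := congrArg vv h00
    rwa [map_one, map_mul, map_inv₀, vvXz, ← WithZero.coe_inv, ← ofAdd_neg] at this
  -- c ≤ 0
  have hc : (0 : ℤ) ≤ -c := by
    apply key (InO_le_one (hm 2 2))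
    have := congrArg vv h22
    rwa [map_one, map_mul, map_inv₀, vvXz, ← WithZero.coe_inv, ← ofAdd_neg] at this
  -- b ≤ -1
  have h22' : (X ^ c : RatFunc ℚ)⁻¹ * m 2 2 = 1 := h22.symm
  have h12' : (X + X⁻¹ : RatFunc ℚ) = (1 - X⁻¹) * ((X ^ b)⁻¹ * m 1 2) := by
    linear_combination h12 - (X + X⁻¹) * h22'
  have hb : (1 : ℤ) ≤ -b := by
    apply key (InO_le_one (hm 1 2))
    have := congrArg vv h12'
    rwa [map_mul, map_mul, map_inv₀, vvXz, vv_one_sub, one_mul, add_comm,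
      vv_add, ← WithZero.coe_inv, ← ofAdd_neg] at this
  -- determinant
  have hd := congrArg Matrix.det heq
  rw [Matrix.det_one, Matrix.det_mul, Matrix.det_mul, Matrix.det_diagonal,
    Fin.prod_univ_three] at hd
  have hdb : Matrix.det bfk = 1 - X⁻¹ := by
    rw [bfk, Matrix.det_fin_three]
    simp [Matrix.vecHead, Matrix.vecTail]
  rw [hdb] at hd
  simp only [Matrix.cons_val_zero, Matrix.cons_val_one, Matrix.head_cons,
    Matrix.cons_val_two, Matrix.tail_cons] at hd
  have hvd := congrArg vv hd
  rw [map_one, map_mul, map_mul, map_mul, map_mul, vv_one_sub, one_mul,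
    vvXz, vvXz, vvXz, ← WithZero.coe_mul, ← WithZero.coe_mul, ← ofAdd_add, ← ofAdd_add] at hvd
  have habc : (1 : ℤ) ≤ 0 := by
    have h1 : vv m.det = ((ofAdd (a + b + c) : Multiplicative ℤ) : ℤₘ₀) := by
      have h2 := inv_eq_of_mul_eq_one_right hvd.symm
      rw [← h2, ← WithZero.coe_inv, ← ofAdd_neg]
      congr 1
      ring_nf
    have h3 : vv m.det⁻¹ ≤ 1 := InO_le_one hdetinv
    rw [map_inv₀, h1, ← WithZero.coe_inv, ← ofAdd_neg, ← WithZero.coe_one, ← ofAdd_zero,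
      WithZero.coe_le_coe, Multiplicative.ofAdd_le] at h3
    omega
  omega

end Aux
end

section
/- Let F be a field and consider f = diag(u, 1, u^{-1}) in SL_3(F[u, u^{-1}]). If m, n >= 3 and k = s f s^{-1} with s as specified, and if g1 = f^m, g2 = k^n generate a free group of rank 2 in SL_3(Q(t)), then in particular no nontrivial reduced word in f^m and k^n equals the identity matrix; equivalently, the subgroup <f^m, k^n> of SL_3(Q(t)) is isomorphic to the free group F_2. -/
open RatFunc

/-- `f = diag(t, 1, t⁻¹)` over `ℚ(t)`. -/
noncomputable def fmat : Matrix (Fin 3) (Fin 3) (RatFunc ℚ) :=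
  !![X, 0, 0; 0, 1, 0; 0, 0, X⁻¹]

namespace BurauAux

open scoped Multiplicative Pointwise
open Multiplicative

local notation "ℤₘ₀" => WithZero (Multiplicative ℤ)

noncomputable instance : DecidableEq (RatFunc ℚ) := Classical.decEq _

abbrev Kq : Type := RatFunc ℚ
abbrev Vec : Type := Fin 3 → Kq
abbrev G : Type := Matrix.SpecialLinearGroup (Fin 3) Kq

noncomputable instance : SMul G Vec := ⟨fun g v => (g : Matrix (Fin 3) (Fin 3) Kq).mulVec v⟩

lemma smul_def (g : G) (v : Vec) : g • v = (g : Matrix (Fin 3) (Fin 3) Kq).mulVec v := rfl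

noncomputable instance : MulAction G Vec where
  one_smul v := by
    show ((1 : G) : Matrix (Fin 3) (Fin 3) Kq).mulVec v = v
    simp
  mul_smul g h v := by
    show ((g * h : G) : Matrix (Fin 3) (Fin 3) Kq).mulVec v = _
    rw [Matrix.SpecialLinearGroup.coe_mul]
    rw [smul_def, smul_def, Matrix.mulVec_mulVec]

/-- The valuation at infinity (degree valuation) on `ℚ(t)`. -/
noncomputable def V : Valuation Kq ℤₘ₀ := FunctionField.inftyValuation ℚ

/-- `w j = ofAdd j` as an element of `ℤₘ₀`; multiplicative version of degree `j`. -/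
def w (j : ℤ) : ℤₘ₀ := (ofAdd j : Multiplicative ℤ)

lemma w_ne_zero (j : ℤ) : w j ≠ 0 := WithZero.coe_ne_zero

lemma w_zero : w 0 = 1 := rfl

lemma w_mul (i j : ℤ) : w i * w j = w (i + j) := by
  rw [w, w, w, ← WithZero.coe_mul, ← ofAdd_add]

lemma w_le_w {i j : ℤ} (h : i ≤ j) : w i ≤ w j := by
  rw [w, w, WithZero.coe_le_coe]; exact Multiplicative.ofAdd_le.2 h

lemma w_lt_w {i j : ℤ} (h : i < j) : w i < w j := by
  rw [w, w, WithZero.coe_lt_coe]; exact Multiplicative.ofAdd_lt.2 h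

lemma w_mul_le_w_mul {i j : ℤ} {x : ℤₘ₀} (h : i ≤ j) : w i * x ≤ w j * x :=
  mul_le_mul_left (w_le_w h) x

lemma w_mul_lt_w_mul {i j : ℤ} {x : ℤₘ₀} (hx : x ≠ 0) (h : i < j) : w i * x < w j * x := by
  obtain ⟨y, rfl⟩ : ∃ y : Multiplicative ℤ, (y : ℤₘ₀) = x :=
    Option.ne_none_iff_exists.mp hx
  rw [w, w, ← WithZero.coe_mul, ← WithZero.coe_mul, WithZero.coe_lt_coe]
  exact mul_lt_mul_left (Multiplicative.ofAdd_lt.2 h) y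

lemma w_mul_le_self {i : ℤ} {x : ℤₘ₀} (h : i ≤ 0) : w i * x ≤ x := by
  calc w i * x ≤ w 0 * x := w_mul_le_w_mul h
  _ = x := by rw [w_zero, one_mul]

lemma w_mul_lt_self {i : ℤ} {x : ℤₘ₀} (hx : x ≠ 0) (h : i < 0) : w i * x < x := by
  calc w i * x < w 0 * x := w_mul_lt_w_mul hx h
  _ = x := by rw [w_zero, one_mul]

lemma le_w_shift {k : ℤ} {x y : ℤₘ₀} (h : w k * x ≤ y) : x ≤ w (-k) * y := by
  have := mul_le_mul_right h (w (-k))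
  rwa [← mul_assoc, w_mul, neg_add_cancel, w_zero, one_mul] at this

lemma VX : V X = w 1 := by
  rw [V]; exact RatFunc.inftyValuation.X ℚ

lemma VXinv : V X⁻¹ = w (-1) := by
  rw [map_inv₀, VX, w, w, ← WithZero.coe_inv, WithZero.coe_inj, ← ofAdd_neg]

lemma VXzpow (e : ℤ) : V (X ^ e : Kq) = w e := by
  rw [map_zpow₀, VX, w, w, ← WithZero.coe_zpow, WithZero.coe_inj, ← ofAdd_zsmul, smul_eq_mul,
    mul_one]

lemma VXinv_sq : V (X⁻¹ ^ 2 : Kq) = w (-2) := by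
  rw [map_pow, VXinv, w, w, ← WithZero.coe_pow, WithZero.coe_inj, ← ofAdd_nsmul]
  norm_num

lemma V_one_add_Xinv : V (X⁻¹ + 1 : Kq) = 1 := by
  have h : V (X⁻¹ : Kq) < V (1 : Kq) := by
    rw [VXinv, Valuation.map_one, ← w_zero]; exact w_lt_w (by norm_num)
  rw [Valuation.map_add_eq_of_lt_right _ h, Valuation.map_one]

lemma V_one_add_Xinv_sq : V (X⁻¹ ^ 2 + 1 : Kq) = 1 := by
  have h : V (X⁻¹ ^ 2 : Kq) < V (1 : Kq) := by
    rw [VXinv_sq, Valuation.map_one, ← w_zero]; exact w_lt_w (by norm_num)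
  rw [Valuation.map_add_eq_of_lt_right _ h, Valuation.map_one]

lemma V_one_sub_Xinv : V (1 - X⁻¹ : Kq) = 1 := by
  refine Valuation.map_one_sub_of_lt V ?_
  rw [VXinv, ← w_zero]; exact w_lt_w (by norm_num)

lemma one_sub_Xinv_ne : (1 - X⁻¹ : Kq) ≠ 0 := by
  intro h
  have := V_one_sub_Xinv
  rw [h, Valuation.map_zero] at this
  exact zero_ne_one this

/-- scalar used in `smat⁻¹`. -/
noncomputable def c₀ : Kq := -((1 - X⁻¹) ^ 2)⁻¹

lemma Vc₀ : V c₀ = 1 := by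
  rw [c₀, Valuation.map_neg, map_inv₀, map_pow, V_one_sub_Xinv, one_pow, inv_one]

lemma c₀_ne : c₀ ≠ 0 := by
  intro h
  have := Vc₀
  rw [h, Valuation.map_zero] at this
  exact zero_ne_one this

/-- Explicit inverse of `smat`: `smat⁻¹ = c₀ • (J * smat)` with `J` the 1↔3 swap. -/
noncomputable def tmat : Matrix (Fin 3) (Fin 3) Kq :=
  !![c₀ * X⁻¹, c₀ * 1, c₀ * 1;
     c₀ * -(X⁻¹ ^ 2 + 1), c₀ * -(X⁻¹ + 1), c₀ * -(X⁻¹ ^ 2 + 1);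
     c₀ * 1, c₀ * 1, c₀ * X⁻¹]

lemma X_ne : (X : Kq) ≠ 0 := RatFunc.X_ne_zero

lemma smat_mul_tmat : smat * tmat = 1 := by
  have h1 : ((1 - X⁻¹ : Kq) ^ 2) ≠ 0 := pow_ne_zero _ one_sub_Xinv_ne
  have hc : c₀ * ((1 - X⁻¹ : Kq) ^ 2) = -1 := by
    rw [c₀, neg_mul, inv_mul_cancel₀ h1]
  ext i j
  fin_cases i <;> fin_cases j <;>
    simp [smat, tmat, Matrix.mul_apply, Fin.sum_univ_three, Fin.isValue, Matrix.cons_val_zero,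
      Matrix.cons_val_one, Matrix.head_cons, Matrix.head_fin_const, Matrix.empty_val',
      Matrix.cons_val_fin_one, Matrix.cons_val, Matrix.cons_val_two, Matrix.tail_cons, Matrix.one_apply, Fin.mk.injEq, ne_eq] <;>
    norm_num <;>
    first
      | linear_combination -hc
      | linear_combination hc
      | ring

lemma tmat_mul_smat : tmat * smat = 1 := mul_eq_one_comm.mp smat_mul_tmat

lemma smat_inv : smat⁻¹ = tmat := Matrix.inv_eq_right_inv smat_mul_tmat

/-- Component expressions of `smat.mulVec`. -/
noncomputable def e₁ (v : Vec) : Kq := v 0 + (v 1 + X⁻¹ * v 2)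
noncomputable def e₂ (v : Vec) : Kq :=
  -((X⁻¹ ^ 2 + 1) * v 0) + (-((X⁻¹ + 1) * v 1) + -((X⁻¹ ^ 2 + 1) * v 2))
noncomputable def e₃ (v : Vec) : Kq := X⁻¹ * v 0 + (v 1 + v 2)

lemma smat_mulVec (v : Vec) : smat.mulVec v = ![e₁ v, e₂ v, e₃ v] := by
  funext i
  fin_cases i <;>
    · simp [smat, Matrix.mulVec, dotProduct, Fin.sum_univ_three, e₁, e₂, e₃]
      ring

lemma tmat_mulVec (v : Vec) : tmat.mulVec v = ![c₀ * e₃ v, c₀ * e₂ v, c₀ * e₁ v] := by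
  funext i
  fin_cases i <;>
    · simp [tmat, Matrix.mulVec, dotProduct, Fin.sum_univ_three, e₁, e₂, e₃,
        Matrix.smul_apply, smul_eq_mul]
      ring

/-! ### Ping-pong sets -/

/-- `x`-dominant vectors (margin 2). -/
def Xp : Set Vec := {v | V (v 0) ≠ 0 ∧ w 2 * max (V (v 1)) (V (v 2)) ≤ V (v 0)}

/-- `z`-dominant vectors (margin 2). -/
def Ym : Set Vec := {v | V (v 2) ≠ 0 ∧ w 2 * max (V (v 0)) (V (v 1)) ≤ V (v 2)}

/-- Profile `(M, ≤M, M-1)`. -/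
def T1 : Set Vec := {u | V (u 0) ≠ 0 ∧ V (u 1) ≤ V (u 0) ∧ V (u 2) = w (-1) * V (u 0)}

/-- Profile `(M-1, ≤M, M)`. -/
def T3 : Set Vec := {u | V (u 2) ≠ 0 ∧ V (u 1) ≤ V (u 2) ∧ V (u 0) = w (-1) * V (u 2)}

lemma Vmul (p q : Kq) : V (p * q) = V p * V q := V.map_mul p q

lemma est_x {v : Vec} (hv : v ∈ Xp) :
    V (e₁ v) = V (v 0) ∧ V (e₂ v) ≤ V (v 0) ∧ V (e₃ v) = w (-1) * V (v 0) := by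
  obtain ⟨h0, hm⟩ := hv
  have h1 : V (v 1) ≤ w (-2) * V (v 0) :=
    le_w_shift (le_trans (mul_le_mul_right (le_max_left _ _) _) hm)
  have h2 : V (v 2) ≤ w (-2) * V (v 0) :=
    le_w_shift (le_trans (mul_le_mul_right (le_max_right _ _) _) hm)
  have h2' : V (X⁻¹ * v 2) ≤ w (-3) * V (v 0) := by
    rw [Vmul, VXinv]
    calc w (-1) * V (v 2) ≤ w (-1) * (w (-2) * V (v 0)) := mul_le_mul_right h2 _
    _ = w (-3) * V (v 0) := by rw [← mul_assoc, w_mul]; norm_num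
  refine ⟨?_, ?_, ?_⟩
  · rw [e₁]
    refine Valuation.map_add_eq_of_lt_left _ ?_
    have hb : V (v 1 + X⁻¹ * v 2) ≤ w (-2) * V (v 0) :=
      Valuation.map_add_le _ h1 (le_trans h2' (w_mul_le_w_mul (by norm_num)))
    exact lt_of_le_of_lt hb (w_mul_lt_self h0 (by norm_num))
  · rw [e₂]
    refine Valuation.map_add_le _ ?_ (Valuation.map_add_le _ ?_ ?_)
    · rw [Valuation.map_neg, Vmul, V_one_add_Xinv_sq, one_mul]
    · rw [Valuation.map_neg, Vmul, V_one_add_Xinv]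
      rw [one_mul]
      exact le_trans h1 (w_mul_le_self (by norm_num))
    · rw [Valuation.map_neg, Vmul, V_one_add_Xinv_sq, one_mul]
      exact le_trans h2 (w_mul_le_self (by norm_num))
  · rw [e₃]
    have hx : V (X⁻¹ * v 0) = w (-1) * V (v 0) := by rw [Vmul, VXinv]
    have hlt : V (v 1 + v 2) < V (X⁻¹ * v 0) := by
      rw [hx]
      exact lt_of_le_of_lt (Valuation.map_add_le _ h1 h2) (w_mul_lt_w_mul h0 (by norm_num))
    rw [Valuation.map_add_eq_of_lt_left _ hlt, hx]

lemma est_z {v : Vec} (hv : v ∈ Ym) :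
    V (e₁ v) = w (-1) * V (v 2) ∧ V (e₂ v) ≤ V (v 2) ∧ V (e₃ v) = V (v 2) := by
  obtain ⟨h2, hm⟩ := hv
  have h0 : V (v 0) ≤ w (-2) * V (v 2) :=
    le_w_shift (le_trans (mul_le_mul_right (le_max_left _ _) _) hm)
  have h1 : V (v 1) ≤ w (-2) * V (v 2) :=
    le_w_shift (le_trans (mul_le_mul_right (le_max_right _ _) _) hm)
  have hz : V (X⁻¹ * v 2) = w (-1) * V (v 2) := by rw [Vmul, VXinv]
  refine ⟨?_, ?_, ?_⟩
  · rw [e₁]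
    have hlt1 : V (v 1) < V (X⁻¹ * v 2) := by
      rw [hz]
      exact lt_of_le_of_lt h1 (w_mul_lt_w_mul h2 (by norm_num))
    have hin : V (v 1 + X⁻¹ * v 2) = w (-1) * V (v 2) := by
      rw [Valuation.map_add_eq_of_lt_right _ hlt1, hz]
    have hlt0 : V (v 0) < V (v 1 + X⁻¹ * v 2) := by
      rw [hin]
      exact lt_of_le_of_lt h0 (w_mul_lt_w_mul h2 (by norm_num))
    rw [Valuation.map_add_eq_of_lt_right _ hlt0, hin]
  · rw [e₂]
    refine Valuation.map_add_le _ ?_ (Valuation.map_add_le _ ?_ ?_)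
    · rw [Valuation.map_neg, Vmul, V_one_add_Xinv_sq, one_mul]
      exact le_trans h0 (w_mul_le_self (by norm_num))
    · rw [Valuation.map_neg, Vmul, V_one_add_Xinv, one_mul]
      exact le_trans h1 (w_mul_le_self (by norm_num))
    · rw [Valuation.map_neg, Vmul, V_one_add_Xinv_sq, one_mul]
  · rw [e₃]
    have hin : V (v 1 + v 2) = V (v 2) := by
      refine Valuation.map_add_eq_of_lt_right _ ?_
      exact lt_of_le_of_lt h1 (w_mul_lt_self h2 (by norm_num))
    have hlt : V (X⁻¹ * v 0) < V (v 1 + v 2) := by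
      rw [hin, Vmul, VXinv]
      have : w (-1) * V (v 0) ≤ w (-3) * V (v 2) := by
        calc w (-1) * V (v 0) ≤ w (-1) * (w (-2) * V (v 2)) := mul_le_mul_right h0 _
        _ = w (-3) * V (v 2) := by rw [← mul_assoc, w_mul]; norm_num
      exact lt_of_le_of_lt this (w_mul_lt_self h2 (by norm_num))
    rw [Valuation.map_add_eq_of_lt_right _ hlt, hin]

lemma w_le_cancel {i j : ℤ} {a : ℤₘ₀} (ha : a ≠ 0) (h : w i * a ≤ w j * a) : i ≤ j := by
  by_contra hc
  exact absurd h (not_le_of_gt (w_mul_lt_w_mul ha (by omega)))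

lemma sigma_mem_x {v : Vec} (hv : v ∈ Xp) : smat.mulVec v ∈ T1 := by
  obtain ⟨hA, hB, hC⟩ := est_x hv
  rw [smat_mulVec]
  have c0 : (![e₁ v, e₂ v, e₃ v] : Vec) 0 = e₁ v := rfl
  have c1 : (![e₁ v, e₂ v, e₃ v] : Vec) 1 = e₂ v := rfl
  have c2 : (![e₁ v, e₂ v, e₃ v] : Vec) 2 = e₃ v := rfl
  refine ⟨?_, ?_, ?_⟩
  · rw [c0, hA]; exact hv.1
  · rw [c0, c1, hA]; exact hB
  · rw [c0, c2, hA, hC]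

lemma sigma_mem_z {v : Vec} (hv : v ∈ Ym) : smat.mulVec v ∈ T3 := by
  obtain ⟨hA, hB, hC⟩ := est_z hv
  rw [smat_mulVec]
  have c0 : (![e₁ v, e₂ v, e₃ v] : Vec) 0 = e₁ v := rfl
  have c1 : (![e₁ v, e₂ v, e₃ v] : Vec) 1 = e₂ v := rfl
  have c2 : (![e₁ v, e₂ v, e₃ v] : Vec) 2 = e₃ v := rfl
  refine ⟨?_, ?_, ?_⟩
  · rw [c2, hC]; exact hv.1
  · rw [c2, c1, hC]; exact hB
  · rw [c0, c2, hA, hC]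

lemma tau_mem_x {v : Vec} (hv : v ∈ Xp) : tmat.mulVec v ∈ T3 := by
  obtain ⟨hA, hB, hC⟩ := est_x hv
  rw [tmat_mulVec]
  have c0 : (![c₀ * e₃ v, c₀ * e₂ v, c₀ * e₁ v] : Vec) 0 = c₀ * e₃ v := rfl
  have c1 : (![c₀ * e₃ v, c₀ * e₂ v, c₀ * e₁ v] : Vec) 1 = c₀ * e₂ v := rfl
  have c2 : (![c₀ * e₃ v, c₀ * e₂ v, c₀ * e₁ v] : Vec) 2 = c₀ * e₁ v := rfl
  refine ⟨?_, ?_, ?_⟩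
  · rw [c2, Vmul, Vc₀, one_mul, hA]; exact hv.1
  · rw [c2, c1, Vmul, Vmul, Vc₀, one_mul, one_mul, hA]; exact hB
  · rw [c0, c2, Vmul, Vmul, Vc₀, one_mul, one_mul, hA, hC]

lemma tau_mem_z {v : Vec} (hv : v ∈ Ym) : tmat.mulVec v ∈ T1 := by
  obtain ⟨hA, hB, hC⟩ := est_z hv
  rw [tmat_mulVec]
  have c0 : (![c₀ * e₃ v, c₀ * e₂ v, c₀ * e₁ v] : Vec) 0 = c₀ * e₃ v := rfl
  have c1 : (![c₀ * e₃ v, c₀ * e₂ v, c₀ * e₁ v] : Vec) 1 = c₀ * e₂ v := rfl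
  have c2 : (![c₀ * e₃ v, c₀ * e₂ v, c₀ * e₁ v] : Vec) 2 = c₀ * e₁ v := rfl
  refine ⟨?_, ?_, ?_⟩
  · rw [c0, Vmul, Vc₀, one_mul, hC]; exact hv.1
  · rw [c0, c1, Vmul, Vmul, Vc₀, one_mul, one_mul, hC]; exact hB
  · rw [c0, c2, Vmul, Vmul, Vc₀, one_mul, one_mul, hA, hC]

lemma VXe_mul (e : ℤ) (p : Kq) : V (X ^ e * p) = w e * V p := by rw [Vmul, VXzpow]

lemma flow_pos {u : Vec} (hu : u ∈ T1 ∪ T3) {e : ℤ} (he : 3 ≤ e) :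
    (![X ^ e * u 0, u 1, X ^ (-e) * u 2] : Vec) ∈ Xp := by
  have c0 : (![X ^ e * u 0, u 1, X ^ (-e) * u 2] : Vec) 0 = X ^ e * u 0 := rfl
  have c1 : (![X ^ e * u 0, u 1, X ^ (-e) * u 2] : Vec) 1 = u 1 := rfl
  have c2 : (![X ^ e * u 0, u 1, X ^ (-e) * u 2] : Vec) 2 = X ^ (-e) * u 2 := rfl
  cases hu with
  | inl h =>
    obtain ⟨hM, h1, h2⟩ := h
    refine ⟨?_, ?_⟩
    · rw [c0, VXe_mul]; exact mul_ne_zero (w_ne_zero e) hM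
    · rw [c0, c1, c2, VXe_mul, VXe_mul]
      have hz : w (-e) * V (u 2) ≤ V (u 0) := by
        rw [h2, ← mul_assoc, w_mul]
        exact w_mul_le_self (by omega)
      calc w 2 * max (V (u 1)) (w (-e) * V (u 2)) ≤ w 2 * V (u 0) :=
            mul_le_mul_right (max_le h1 hz) _
      _ ≤ w e * V (u 0) := w_mul_le_w_mul (by omega)
  | inr h =>
    obtain ⟨hC, h1, h0⟩ := h
    refine ⟨?_, ?_⟩
    · rw [c0, VXe_mul, h0, ← mul_assoc, w_mul]
      exact mul_ne_zero (w_ne_zero _) hC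
    · rw [c0, c1, c2, VXe_mul, VXe_mul, h0, ← mul_assoc, w_mul]
      have hz : w (-e) * V (u 2) ≤ V (u 2) := w_mul_le_self (by omega)
      calc w 2 * max (V (u 1)) (w (-e) * V (u 2)) ≤ w 2 * V (u 2) :=
            mul_le_mul_right (max_le h1 hz) _
      _ ≤ w (e + -1) * V (u 2) := w_mul_le_w_mul (by omega)

lemma flow_neg {u : Vec} (hu : u ∈ T1 ∪ T3) {e : ℤ} (he : e ≤ -3) :
    (![X ^ e * u 0, u 1, X ^ (-e) * u 2] : Vec) ∈ Ym := by
  have c0 : (![X ^ e * u 0, u 1, X ^ (-e) * u 2] : Vec) 0 = X ^ e * u 0 := rfl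
  have c1 : (![X ^ e * u 0, u 1, X ^ (-e) * u 2] : Vec) 1 = u 1 := rfl
  have c2 : (![X ^ e * u 0, u 1, X ^ (-e) * u 2] : Vec) 2 = X ^ (-e) * u 2 := rfl
  cases hu with
  | inl h =>
    obtain ⟨hM, h1, h2⟩ := h
    refine ⟨?_, ?_⟩
    · rw [c2, VXe_mul, h2, ← mul_assoc, w_mul]
      exact mul_ne_zero (w_ne_zero _) hM
    · rw [c0, c1, c2, VXe_mul, VXe_mul, h2, ← mul_assoc, w_mul]
      have hx : w e * V (u 0) ≤ V (u 0) := w_mul_le_self (by omega)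
      calc w 2 * max (w e * V (u 0)) (V (u 1)) ≤ w 2 * V (u 0) :=
            mul_le_mul_right (max_le hx h1) _
      _ ≤ w (-e + -1) * V (u 0) := w_mul_le_w_mul (by omega)
  | inr h =>
    obtain ⟨hC, h1, h0⟩ := h
    refine ⟨?_, ?_⟩
    · rw [c2, VXe_mul]; exact mul_ne_zero (w_ne_zero _) hC
    · rw [c0, c1, c2, VXe_mul, VXe_mul, h0, ← mul_assoc, w_mul]
      have hx : w (e + -1) * V (u 2) ≤ V (u 2) := w_mul_le_self (by omega)
      calc w 2 * max (w (e + -1) * V (u 2)) (V (u 1)) ≤ w 2 * V (u 2) :=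
            mul_le_mul_right (max_le hx h1) _
      _ ≤ w (-e) * V (u 2) := w_mul_le_w_mul (by omega)

lemma T1_not_Xp {u : Vec} (h : u ∈ T1) (hx : u ∈ Xp) : False := by
  obtain ⟨hM, h1, h2⟩ := h
  have h3 : w 2 * V (u 2) ≤ V (u 0) :=
    le_trans (mul_le_mul_right (le_max_right _ _) _) hx.2
  rw [h2, ← mul_assoc, w_mul] at h3
  norm_num at h3
  have h4 : w 1 * V (u 0) ≤ w 0 * V (u 0) := by rw [w_zero, one_mul]; exact h3
  exact absurd (w_le_cancel hM h4) (by omega)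

lemma T1_not_Ym {u : Vec} (h : u ∈ T1) (hy : u ∈ Ym) : False := by
  obtain ⟨hM, h1, h2⟩ := h
  have h3 : w 2 * V (u 0) ≤ w (-1) * V (u 0) := by
    rw [← h2]
    exact le_trans (mul_le_mul_right (le_max_left _ _) _) hy.2
  exact absurd (w_le_cancel hM h3) (by omega)

lemma T3_not_Xp {u : Vec} (h : u ∈ T3) (hx : u ∈ Xp) : False := by
  obtain ⟨hC, h1, h0⟩ := h
  have h3 : w 2 * V (u 2) ≤ w (-1) * V (u 2) := by
    rw [← h0]
    exact le_trans (mul_le_mul_right (le_max_right _ _) _) hx.2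
  exact absurd (w_le_cancel hC h3) (by omega)

lemma T3_not_Ym {u : Vec} (h : u ∈ T3) (hy : u ∈ Ym) : False := by
  obtain ⟨hC, h1, h0⟩ := h
  have h3 : w 2 * V (u 0) ≤ V (u 2) :=
    le_trans (mul_le_mul_right (le_max_left _ _) _) hy.2
  rw [h0, ← mul_assoc, w_mul] at h3
  norm_num at h3
  have h4 : w 1 * V (u 2) ≤ w 0 * V (u 2) := by rw [w_zero, one_mul]; exact h3
  exact absurd (w_le_cancel hC h4) (by omega)

lemma T_not_mem {u : Vec} (hu : u ∈ T1 ∪ T3) : u ∉ Xp ∪ Ym := by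
  rintro (hx | hy) <;> cases hu with
  | inl h => first | exact T1_not_Xp h hx | exact T1_not_Ym h hy
  | inr h => first | exact T3_not_Xp h hx | exact T3_not_Ym h hy

section Action

variable (F K : G)

lemma AF (hF : (F : Matrix (Fin 3) (Fin 3) Kq) = fmat) (u : Vec) :
    F • u = ![X * u 0, u 1, X⁻¹ * u 2] := by
  rw [smul_def, hF]
  funext i
  fin_cases i <;>
    · simp [fmat, Matrix.mulVec, dotProduct, Fin.sum_univ_three]

lemma AFinv (hF : (F : Matrix (Fin 3) (Fin 3) Kq) = fmat) (u : Vec) :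
    F⁻¹ • u = ![X⁻¹ * u 0, u 1, X * u 2] := by
  rw [inv_smul_eq_iff, AF F hF]
  funext i
  fin_cases i <;>
    simp [← mul_assoc, mul_inv_cancel₀ X_ne, inv_mul_cancel₀ X_ne]

lemma AFz (hF : (F : Matrix (Fin 3) (Fin 3) Kq) = fmat) (e : ℤ) :
    ∀ u : Vec, (F ^ e) • u = ![X ^ e * u 0, u 1, X ^ (-e) * u 2] := by
  induction e using Int.induction_on with
  | zero =>
    intro u
    rw [zpow_zero, one_smul]
    funext i
    fin_cases i <;> simp
  | succ e ih =>
    intro u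
    rw [show ((e : ℤ) + 1) = e + 1 from rfl, zpow_add_one, mul_smul, AF F hF, ih]
    funext i
    fin_cases i <;>
      simp [zpow_add₀ X_ne, neg_add, mul_assoc] <;> ring
  | pred e ih =>
    intro u
    rw [zpow_sub_one, mul_smul, AFinv F hF, ih]
    funext i
    fin_cases i <;>
      simp [zpow_sub₀ X_ne, zpow_add₀ X_ne, neg_sub, sub_eq_add_neg, neg_add, zpow_neg,
        mul_assoc] <;> ring

lemma AK (hK : (K : Matrix (Fin 3) (Fin 3) Kq) = smat * fmat * smat⁻¹) (v : Vec) :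
    K • (smat.mulVec v) = smat.mulVec (fmat.mulVec v) := by
  rw [smul_def, hK, smat_inv, Matrix.mulVec_mulVec, Matrix.mulVec_mulVec,
    show smat * fmat * tmat * smat = smat * fmat by
      rw [mul_assoc (smat * fmat), tmat_mul_smat, mul_one]]

lemma AKz (hF : (F : Matrix (Fin 3) (Fin 3) Kq) = fmat)
    (hK : (K : Matrix (Fin 3) (Fin 3) Kq) = smat * fmat * smat⁻¹) (e : ℤ) :
    ∀ v : Vec, (K ^ e) • (smat.mulVec v) = smat.mulVec ((F ^ e) • v) := by
  have hfm : ∀ v : Vec, fmat.mulVec v = F • v := fun v => by rw [smul_def, hF]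
  induction e using Int.induction_on with
  | zero => intro v; rw [zpow_zero, zpow_zero, one_smul, one_smul]
  | succ e ih =>
    intro v
    rw [zpow_add_one, mul_smul, AK K hK, ih (fmat.mulVec v), hfm,
      ← mul_smul, ← zpow_add_one]
  | pred e ih =>
    intro v
    have hinv : K⁻¹ • (smat.mulVec v) = smat.mulVec (F⁻¹ • v) := by
      rw [inv_smul_eq_iff, AK K hK, hfm, smul_inv_smul]
    rw [zpow_sub_one, mul_smul, hinv, ih (F⁻¹ • v), ← mul_smul, ← zpow_sub_one]

end Action

section Main

open scoped Pointwise

variable (F K : G)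

lemma sigma_mem {v : Vec} (hv : v ∈ Xp ∪ Ym) : smat.mulVec v ∈ T1 ∪ T3 := by
  cases hv with
  | inl h => exact Or.inl (sigma_mem_x h)
  | inr h => exact Or.inr (sigma_mem_z h)

lemma tau_mem {v : Vec} (hv : v ∈ Xp ∪ Ym) : tmat.mulVec v ∈ T1 ∪ T3 := by
  cases hv with
  | inl h => exact Or.inr (tau_mem_x h)
  | inr h => exact Or.inl (tau_mem_z h)

lemma flow_mem (hF : (F : Matrix (Fin 3) (Fin 3) Kq) = fmat) {u : Vec} (hu : u ∈ T1 ∪ T3) {e : ℤ} (he : 3 ≤ e ∨ e ≤ -3) :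
    (F ^ e) • u ∈ Xp ∪ Ym := by
  rw [AFz F hF]
  cases he with
  | inl h => exact Or.inl (flow_pos hu h)
  | inr h => exact Or.inr (flow_neg hu h)

lemma big_exp {m : ℕ} (hm : 3 ≤ m) {k : ℤ} (hk : k ≠ 0) :
    3 ≤ (m : ℤ) * k ∨ (m : ℤ) * k ≤ -3 := by
  have hm' : (3 : ℤ) ≤ (m : ℤ) := by exact_mod_cast hm
  rcases lt_or_gt_of_ne hk with h | h
  · right; nlinarith
  · left; nlinarith

lemma inclA (hF : (F : Matrix (Fin 3) (Fin 3) Kq) = fmat) {m : ℕ} (hm : 3 ≤ m) {k : ℤ} (hk : k ≠ 0) :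
    (F ^ m) ^ k • (smat.mulVec '' (Xp ∪ Ym)) ⊆ Xp ∪ Ym := by
  rintro u hu
  obtain ⟨x, hx, rfl⟩ := hu
  obtain ⟨v, hv, rfl⟩ := hx
  have hpow : (F ^ m) ^ k = F ^ ((m : ℤ) * k) := by
    rw [← zpow_natCast F m, ← zpow_mul]
  rw [hpow]
  exact flow_mem F hF (sigma_mem hv) (big_exp hm hk)

lemma inclB (hF : (F : Matrix (Fin 3) (Fin 3) Kq) = fmat)
    (hK : (K : Matrix (Fin 3) (Fin 3) Kq) = smat * fmat * smat⁻¹) {n : ℕ} (hn : 3 ≤ n) {k : ℤ} (hk : k ≠ 0) :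
    (K ^ n) ^ k • (Xp ∪ Ym) ⊆ smat.mulVec '' (Xp ∪ Ym) := by
  rintro u hu
  obtain ⟨v, hv, rfl⟩ := hu
  show ((K ^ n) ^ k) • v ∈ smat.mulVec '' (Xp ∪ Ym)
  have hpow : (K ^ n) ^ k = K ^ ((n : ℤ) * k) := by
    rw [← zpow_natCast K n, ← zpow_mul]
  have hv' : v = smat.mulVec (tmat.mulVec v) := by
    rw [Matrix.mulVec_mulVec, smat_mul_tmat, Matrix.one_mulVec]
  have hstep : (K ^ ((n : ℤ) * k)) • v =
      smat.mulVec ((F ^ ((n : ℤ) * k)) • (tmat.mulVec v)) := by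
    conv_lhs => rw [hv']
    exact AKz F K hF hK _ _
  rw [hpow, hstep]
  exact ⟨(F ^ ((n : ℤ) * k)) • (tmat.mulVec v),
    flow_mem F hF (tau_mem hv) (big_exp hn hk), rfl⟩

lemma Xp_nonempty : (Xp ∪ Ym : Set Vec).Nonempty := by
  refine ⟨![X ^ (2:ℕ), 1, 1], Or.inl ⟨?_, ?_⟩⟩
  · show V (X ^ (2:ℕ)) ≠ 0
    rw [map_pow, VX, pow_two, w_mul]
    exact w_ne_zero _
  · show w 2 * max (V (1 : Kq)) (V (1 : Kq)) ≤ V (X ^ (2:ℕ))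
    rw [map_pow, VX, pow_two, w_mul, Valuation.map_one, max_self, mul_one]
    norm_num

end Main

section PingPong

open Cardinal

/-- Ping-pong lemma for two (or more) cyclic groups, in the Tits form: powers of the
generators shuffle the sets into each other. -/
theorem freeGroup_lift_injective_of_ping_pong {ι : Type} [Nontrivial ι] {H : Type*} [Group H]
    (a : ι → H) {α : Type*} [MulAction H α] (X : ι → Set α)
    (hnem : ∀ i, (X i).Nonempty) (hdisj : Pairwise (Function.onFun Disjoint X))
    (hact : Pairwise fun i j => ∀ k : ℤ, k ≠ 0 → a i ^ k • X j ⊆ X i) :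
    Function.Injective (FreeGroup.lift a) := by
  have expr : FreeGroup.lift a =
      (Monoid.CoprodI.lift fun i => FreeGroup.lift fun _ => a i).comp
        (@freeGroupEquivCoprodI ι).toMonoidHom := by
    ext i
    simp
  rw [expr, MonoidHom.coe_comp]
  refine Function.Injective.comp ?_ (MulEquiv.injective freeGroupEquivCoprodI)
  show Function.Injective ⇑(Monoid.CoprodI.lift fun i : ι => FreeGroup.lift fun _ => a i)
  let Hf : ι → Type _ := fun _i => FreeGroup Unit
  let f : ∀ i, Hf i →* H := fun i => FreeGroup.lift fun _ => a i
  apply Monoid.CoprodI.lift_injective_of_ping_pong f _ X hnem hdisj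
  · show Pairwise fun i j => ∀ h : Hf i, h ≠ 1 → f i h • X j ⊆ X i
    intro i j hij
    refine FreeGroup.freeGroupUnitEquivInt.forall_congr_left.mpr ?_
    intro k hne1
    change FreeGroup.lift (fun _ => a i) (FreeGroup.of () ^ k) • X j ⊆ X i
    simp only [map_zpow, FreeGroup.lift_apply_of]
    have hk : k ≠ 0 := by
      rintro rfl
      exact hne1 (by simp [Hf, FreeGroup.freeGroupUnitEquivInt])
    exact hact hij k hk
  · show _ ∨ ∃ i, 3 ≤ #(Hf i)
    inhabit ι
    right
    refine ⟨Inhabited.default, ?_⟩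
    simp only [Hf]
    rw [FreeGroup.freeGroupUnitEquivInt.cardinal_eq, Cardinal.mk_denumerable]
    exact le_of_lt (nat_lt_aleph0 3)

end PingPong

end BurauAux

open BurauAux in
open scoped Pointwise in
/-- **Main theorem (Witzel–Zaremsky).** For `m, n ≥ 3`, the elements `fᵐ` and `kⁿ`
(with `k = s f s⁻¹`) of `SL₃(ℚ(t))` generate a free group of rank 2: the canonical
homomorphism from the free group on two generators sending them to `fᵐ` and `kⁿ` is
injective, i.e. no nontrivial reduced word in `fᵐ, kⁿ` is the identity. -/
theorem free_subgroup_burau (F K : Matrix.SpecialLinearGroup (Fin 3) (RatFunc ℚ))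
    (hF : (F : Matrix (Fin 3) (Fin 3) (RatFunc ℚ)) = fmat)
    (hK : (K : Matrix (Fin 3) (Fin 3) (RatFunc ℚ)) = smat * fmat * smat⁻¹)
    (m n : ℕ) (hm : 3 ≤ m) (hn : 3 ≤ n) :
    Function.Injective ⇑(FreeGroup.lift fun i : Fin 2 => if i = 0 then F ^ m else K ^ n) := by
  classical
  refine freeGroup_lift_injective_of_ping_pong _
    (![Xp ∪ Ym, smat.mulVec '' (Xp ∪ Ym)] : Fin 2 → Set Vec) ?_ ?_ ?_
  · intro i
    fin_cases i
    · exact Xp_nonempty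
    · exact Xp_nonempty.image _
  · intro i j hij
    have key : Disjoint (Xp ∪ Ym : Set Vec) (smat.mulVec '' (Xp ∪ Ym)) := by
      rw [Set.disjoint_right]
      rintro u ⟨v, hv, rfl⟩
      exact T_not_mem (sigma_mem hv)
    fin_cases i <;> fin_cases j
    · exact absurd rfl hij
    · exact key
    · exact key.symm
    · exact absurd rfl hij
  · intro i j hij
    fin_cases i <;> fin_cases j
    · exact absurd rfl hij
    · intro k hk
      show ((F ^ m) ^ k) • (smat.mulVec '' (Xp ∪ Ym)) ⊆ Xp ∪ Ym
      exact inclA F hF hm hk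
    · intro k hk
      show ((K ^ n) ^ k) • (Xp ∪ Ym) ⊆ smat.mulVec '' (Xp ∪ Ym)
      exact inclB F K hF hK hn hk
    · exact absurd rfl hij
end
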